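/- arXiv:2501.15940 — 2 statements merged into one kernel-verified Lean document; each statement's English description precedes it below -/
import Mathlib

section
/- Let A ∈ M(2,ℂ) be nonzero with singular values σ₁(A) ≥ σ₂(A), and suppose σ₁(A) > σ₂(A). Let s(A) denote the most contracted direction of A (the unit eigenvector direction of A*A for eigenvalue σ₂(A)²). If z is a unit vector in ℂ² with ‖A z‖ < δ, then the distance between the line spanned by z and s(A) satisfies d(span z, s(A)) ≤ 2(δ + σ₂(A))/σ₁(A). -/
noncomputable section
open Matrix
def vnorm (v : Fin 2 → ℂ) : ℝ := Real.sqrt (‖v 0‖ ^ 2 + ‖v 1‖ ^ 2)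
def opNorm (A : Matrix (Fin 2) (Fin 2) ℂ) : ℝ :=
  ‖(Matrix.toEuclideanCLM (𝕜 := ℂ) (n := Fin 2) A)‖
def sigma1 (A : Matrix (Fin 2) (Fin 2) ℂ) : ℝ := opNorm A
def sigma2 (A : Matrix (Fin 2) (Fin 2) ℂ) : ℝ := ‖A.det‖ / opNorm A
def dLine (u v : Fin 2 → ℂ) : ℝ := 2 * ‖u 0 * v 1 - u 1 * v 0‖
def prodSeq (B : ℤ → Matrix (Fin 2) (Fin 2) ℂ) : ℕ → ℤ → Matrix (Fin 2) (Fin 2) ℂ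
  | 0, _ => 1
  | n+1, j => B (j + n) * prodSeq B n j
def IsMostContracted (A : Matrix (Fin 2) (Fin 2) ℂ) (w : Fin 2 → ℂ) : Prop :=
  vnorm w = 1 ∧ vnorm (A.mulVec w) = sigma2 A
def IsMostExpandedImage (A : Matrix (Fin 2) (Fin 2) ℂ) (w : Fin 2 → ℂ) : Prop :=
  vnorm w = 1 ∧ ∃ z : Fin 2 → ℂ, vnorm z = 1 ∧ vnorm (A.mulVec z) = sigma1 A ∧ ∃ c : ℂ, A.mulVec z = c • w

lemma vnorm_nonneg' (v : Fin 2 → ℂ) : 0 ≤ vnorm v := Real.sqrt_nonneg _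

lemma vnorm_eq_norm (v : Fin 2 → ℂ) : vnorm v = ‖(WithLp.equiv 2 (Fin 2 → ℂ)).symm v‖ := by
  rw [EuclideanSpace.norm_eq]
  simp [vnorm, Fin.sum_univ_two]

lemma vnorm_smul (c : ℂ) (v : Fin 2 → ℂ) : vnorm (c • v) = ‖c‖ * vnorm v := by
  simp only [vnorm, Pi.smul_apply, smul_eq_mul, norm_mul, mul_pow]
  rw [← mul_add, Real.sqrt_mul (by positivity), Real.sqrt_sq (norm_nonneg c)]

lemma cs_det (u v : Fin 2 → ℂ) :
    ‖u 0 * v 1 - u 1 * v 0‖ ≤ vnorm u * vnorm v := by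
  have h1 : ‖u 0 * v 1 - u 1 * v 0‖
      ≤ ‖u 0‖ * ‖v 1‖ + ‖u 1‖ * ‖v 0‖ := by
    calc ‖u 0 * v 1 - u 1 * v 0‖
        ≤ ‖u 0 * v 1‖ + ‖u 1 * v 0‖ := norm_sub_le _ _
      _ = _ := by rw [norm_mul, norm_mul]
  have h2 : ‖u 0‖ * ‖v 1‖ + ‖u 1‖ * ‖v 0‖
      ≤ vnorm u * vnorm v := by
    rw [vnorm, vnorm, ← Real.sqrt_mul (by positivity)]
    calc ‖u 0‖ * ‖v 1‖ + ‖u 1‖ * ‖v 0‖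
        = Real.sqrt ((‖u 0‖ * ‖v 1‖ +
            ‖u 1‖ * ‖v 0‖) ^ 2) := (Real.sqrt_sq (by positivity)).symm
      _ ≤ _ := by
        apply Real.sqrt_le_sqrt
        nlinarith [sq_nonneg (‖u 0‖ * ‖v 0‖ -
          ‖u 1‖ * ‖v 1‖)]
  linarith

theorem stmt6 (A : Matrix (Fin 2) (Fin 2) ℂ) (hA : A ≠ 0) (hgap : sigma2 A < sigma1 A)
    (s : Fin 2 → ℂ) (hs : IsMostContracted A s)
    (z : Fin 2 → ℂ) (hz : vnorm z = 1) (δ : ℝ) (hAz : vnorm (A.mulVec z) < δ) :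
    dLine z s ≤ 2 * (δ + sigma2 A) / sigma1 A := by
  obtain ⟨hs1, hs2⟩ := hs
  have hσ1pos : 0 < sigma1 A := by
    rw [sigma1, opNorm]
    have : Matrix.toEuclideanCLM (𝕜 := ℂ) (n := Fin 2) A ≠ 0 := by
      intro h
      exact hA ((Matrix.toEuclideanCLM (𝕜 := ℂ) (n := Fin 2)).injective
        (h.trans (map_zero _).symm))
    exact norm_pos_iff.mpr this
  have hσ2nonneg : 0 ≤ sigma2 A := hs2 ▸ vnorm_nonneg' _
  have hδpos : 0 < δ := lt_of_le_of_lt (vnorm_nonneg' _) hAz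
  set a := ‖z 0 * s 1 - z 1 * s 0‖ with ha
  have hanonneg : 0 ≤ a := norm_nonneg _
  have hdgoal : dLine z s = 2 * a := rfl
  rcases eq_or_lt_of_le hσ2nonneg with hσ2 | hσ2
  · -- sigma2 A = 0 case: A s = 0
    have hAs : A.mulVec s = 0 := by
      have h0 : vnorm (A.mulVec s) = 0 := by rw [hs2, ← hσ2]
      rw [vnorm] at h0
      have h0' := (Real.sqrt_eq_zero (by positivity)).mp h0
      have h00 : ‖(A.mulVec s) 0‖ = 0 := le_antisymm
        (by nlinarith [norm_nonneg ((A.mulVec s) 0), norm_nonneg ((A.mulVec s) 1)])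
        (norm_nonneg _)
      have h01 : ‖(A.mulVec s) 1‖ = 0 := le_antisymm
        (by nlinarith [norm_nonneg ((A.mulVec s) 0), norm_nonneg ((A.mulVec s) 1)])
        (norm_nonneg _)
      funext i
      fin_cases i
      · exact norm_eq_zero.mp h00
      · exact norm_eq_zero.mp h01
    set w : Fin 2 → ℂ := ![-(starRingEnd ℂ) (s 1), (starRingEnd ℂ) (s 0)] with hw
    have hsnorm : ‖s 0‖ ^ 2 + ‖s 1‖ ^ 2 = 1 := by
      have h := hs1
      rw [vnorm] at h
      nlinarith [Real.sq_sqrt (show (0:ℝ) ≤ ‖s 0‖ ^ 2 + ‖s 1‖ ^ 2 by positivity)]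
    have hsnormC : s 0 * (starRingEnd ℂ) (s 0) + s 1 * (starRingEnd ℂ) (s 1) = 1 := by
      rw [Complex.mul_conj, Complex.mul_conj, ← Complex.ofReal_add]
      norm_cast
      rw [Complex.normSq_eq_norm_sq, Complex.normSq_eq_norm_sq]
      exact hsnorm
    have hAsc : ∀ i, A i 0 * s 0 + A i 1 * s 1 = 0 := by
      intro i
      have h := congrFun hAs i
      simpa [Matrix.mulVec, dotProduct, Fin.sum_univ_two] using h
    have hmul : ∀ x : Fin 2 → ℂ, A.mulVec x = (-(s 1) * x 0 + s 0 * x 1) • A.mulVec w := by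
      intro x
      funext i
      simp only [Matrix.mulVec, dotProduct, Fin.sum_univ_two, Pi.smul_apply,
        smul_eq_mul, hw, Matrix.cons_val_zero, Matrix.cons_val_one, Matrix.head_cons]
      linear_combination ((starRingEnd ℂ) (s 0) * x 0 + (starRingEnd ℂ) (s 1) * x 1) * hAsc i +
        (-(A i 0 * x 0 + A i 1 * x 1)) * hsnormC
    have hop : sigma1 A ≤ vnorm (A.mulVec w) := by
      rw [sigma1, opNorm]
      apply ContinuousLinearMap.opNorm_le_bound _ (vnorm_nonneg' _)
      intro x
      set x' : Fin 2 → ℂ := WithLp.equiv 2 (Fin 2 → ℂ) x with hx'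
      have hxx : x = (WithLp.equiv 2 (Fin 2 → ℂ)).symm x' := rfl
      rw [hxx]
      rw [show Matrix.toEuclideanCLM (𝕜 := ℂ) (n := Fin 2) A ((WithLp.equiv 2 (Fin 2 → ℂ)).symm x') = (WithLp.equiv 2 (Fin 2 → ℂ)).symm (A.mulVec x') from rfl]
      rw [← vnorm_eq_norm, ← vnorm_eq_norm]
      rw [hmul x', vnorm_smul]
      have hb : ‖-(s 1) * x' 0 + s 0 * x' 1‖ ≤ vnorm x' := by
        rw [show -(s 1) * x' 0 + s 0 * x' 1 = -(x' 0 * s 1 - x' 1 * s 0) by ring,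
          norm_neg]
        calc ‖x' 0 * s 1 - x' 1 * s 0‖ ≤ vnorm x' * vnorm s := cs_det _ _
          _ = vnorm x' := by rw [hs1, mul_one]
      calc ‖-(s 1) * x' 0 + s 0 * x' 1‖ * vnorm (A.mulVec w)
          ≤ vnorm x' * vnorm (A.mulVec w) :=
            mul_le_mul_of_nonneg_right hb (vnorm_nonneg' _)
        _ = vnorm (A.mulVec w) * vnorm x' := mul_comm _ _
    have hAz' : vnorm (A.mulVec z) = a * vnorm (A.mulVec w) := by
      rw [hmul z, vnorm_smul]
      rw [show -(s 1) * z 0 + s 0 * z 1 = -(z 0 * s 1 - z 1 * s 0) by ring,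
        norm_neg, ← ha]
    have key : sigma1 A * a ≤ vnorm (A.mulVec z) := by
      rw [hAz', mul_comm a]
      exact mul_le_mul_of_nonneg_right hop hanonneg
    rw [hdgoal, le_div_iff₀ hσ1pos]
    nlinarith
  · -- sigma2 A > 0 case
    have hopne : opNorm A ≠ 0 := ne_of_gt hσ1pos
    have hdet : ‖A.det‖ = sigma1 A * sigma2 A := by
      rw [sigma1, sigma2, mul_div_cancel₀ _ hopne]
    have stepA : ‖A.det‖ * a ≤ vnorm (A.mulVec z) * vnorm (A.mulVec s) := by
      have key : (A.mulVec z) 0 * (A.mulVec s) 1 - (A.mulVec z) 1 * (A.mulVec s) 0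
          = A.det * (z 0 * s 1 - z 1 * s 0) := by
        simp [Matrix.mulVec, dotProduct, Fin.sum_univ_two, Matrix.det_fin_two]
        ring
      calc ‖A.det‖ * a = ‖(A.mulVec z) 0 * (A.mulVec s) 1 -
            (A.mulVec z) 1 * (A.mulVec s) 0‖ := by rw [key, norm_mul]
        _ ≤ _ := cs_det _ _
    rw [hs2, hdet] at stepA
    have h1 : sigma1 A * a ≤ vnorm (A.mulVec z) := by nlinarith
    rw [hdgoal, le_div_iff₀ hσ1pos]
    nlinarith
end
end

section
/- Let Λ : ℤ → M(2,ℂ) be a diagonal sequence Λ(j) = diag(λ_j⁺, λ_j⁻) with |λ_j⁺| ≥ η > 0, ‖Λ(j)‖ < M, and suppose there exists Ñ such that for all n ≥ Ñ and all j, |∏_{k=0}^{n−1} λ_{j+k}⁺| = ‖Λ_n(j)‖. Then Λ satisfies the fast invertibility bound: for all n ≥ 0 and j, ‖Λ_{n+1}(j)‖ / (‖Λ(j)‖·‖Λ_n(j+1)‖) ≥ min(η/M, (η/M)^{Ñ}) and ‖Λ_{n+1}(j)‖ / (‖Λ_n(j)‖·‖Λ(j+n)‖) ≥ min(η/M, (η/M)^{Ñ}).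 -/
noncomputable section
open Matrix
lemma opNorm_mul_le (A B : Matrix (Fin 2) (Fin 2) ℂ) : opNorm (A*B) ≤ opNorm A * opNorm B := by
  unfold opNorm; rw [_root_.map_mul]; exact norm_mul_le _ _

lemma opNorm_one : opNorm (1 : Matrix (Fin 2) (Fin 2) ℂ) = 1 := by
  unfold opNorm; rw [_root_.map_one]; exact norm_one

lemma abs_fst_le_opNorm (a b : ℂ) : ‖a‖ ≤ opNorm (Matrix.diagonal ![a,b]) := by
  have h := (Matrix.toEuclideanCLM (𝕜:=ℂ) (n:=Fin 2) (Matrix.diagonal ![a,b])).le_opNorm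
    (WithLp.toLp 2 ![1,0])
  rw [Matrix.toEuclideanCLM_toLp] at h
  simpa [EuclideanSpace.norm_eq, Fin.sum_univ_two, Matrix.mulVec_diagonal, opNorm] using h

lemma prodSeq_diag (lp lm : ℤ → ℂ) (Λ : ℤ → Matrix (Fin 2) (Fin 2) ℂ)
    (hΛ : ∀ j, Λ j = Matrix.diagonal ![lp j, lm j]) (n : ℕ) (j : ℤ) :
    prodSeq Λ n j = Matrix.diagonal
      ![∏ k ∈ Finset.range n, lp (j + k), ∏ k ∈ Finset.range n, lm (j + k)] := by
  induction n with
  | zero =>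
    show (1 : Matrix (Fin 2) (Fin 2) ℂ) = _
    ext i k
    fin_cases i <;> fin_cases k <;> simp [Matrix.one_apply]
  | succ n ih =>
    show Λ (j + n) * prodSeq Λ n j = _
    rw [hΛ, ih, Matrix.diagonal_mul_diagonal]
    ext i k
    fin_cases i <;> fin_cases k <;>
      simp [Matrix.diagonal_apply, Finset.prod_range_succ] <;> ring

theorem stmt10 (lp lm : ℤ → ℂ) (Λ : ℤ → Matrix (Fin 2) (Fin 2) ℂ)
    (hΛ : ∀ j, Λ j = Matrix.diagonal ![lp j, lm j])
    (η M : ℝ) (hη : 0 < η) (hlp : ∀ j, η ≤ ‖lp j‖)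
    (hM : ∀ j, opNorm (Λ j) < M)
    (Nt : ℕ)
    (hnorm : ∀ (n : ℕ), Nt ≤ n → ∀ j : ℤ,
      ‖∏ k ∈ Finset.range n, lp (j + k)‖ = opNorm (prodSeq Λ n j)) :
    ∀ (n : ℕ) (j : ℤ),
      opNorm (prodSeq Λ (n+1) j) / (opNorm (Λ j) * opNorm (prodSeq Λ n (j+1)))
        ≥ min (η / M) ((η / M) ^ Nt) ∧
      opNorm (prodSeq Λ (n+1) j) / (opNorm (prodSeq Λ n j) * opNorm (Λ (j + n)))
        ≥ min (η / M) ((η / M) ^ Nt) := by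
  -- basic facts
  have habs_le : ∀ j, ‖lp j‖ ≤ opNorm (Λ j) := fun j => by
    rw [hΛ]; exact abs_fst_le_opNorm _ _
  have hΛpos : ∀ j, 0 < opNorm (Λ j) := fun j =>
    lt_of_lt_of_le (lt_of_lt_of_le hη (hlp j)) (habs_le j)
  have hMpos : 0 < M := lt_trans (hΛpos 0) (hM 0)
  have hηM : η < M := lt_of_le_of_lt (le_trans (hlp 0) (habs_le 0)) (hM 0)
  have hηM1 : η / M ≤ 1 := le_of_lt ((div_lt_one hMpos).mpr hηM)
  have hηM0 : 0 ≤ η / M := le_of_lt (div_pos hη hMpos)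
  -- lower bound via the product of lp entries
  have habsprod : ∀ (n : ℕ) (j : ℤ),
      ‖∏ k ∈ Finset.range n, lp (j + k)‖ ≤ opNorm (prodSeq Λ n j) := fun n j => by
    rw [prodSeq_diag lp lm Λ hΛ]; exact abs_fst_le_opNorm _ _
  have hprod_lb : ∀ (n : ℕ) (j : ℤ),
      η ^ n ≤ ‖∏ k ∈ Finset.range n, lp (j + k)‖ := fun n j => by
    rw [norm_prod]
    calc η ^ n = ∏ _k ∈ Finset.range n, η := by rw [Finset.prod_const, Finset.card_range]
    _ ≤ ∏ k ∈ Finset.range n, ‖lp (j + k)‖ :=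
        Finset.prod_le_prod (fun _ _ => le_of_lt hη) (fun k _ => hlp _)
  have hlb : ∀ (n : ℕ) (j : ℤ), η ^ n ≤ opNorm (prodSeq Λ n j) := fun n j =>
    le_trans (hprod_lb n j) (habsprod n j)
  have hpos : ∀ (n : ℕ) (j : ℤ), 0 < opNorm (prodSeq Λ n j) := fun n j =>
    lt_of_lt_of_le (pow_pos hη n) (hlb n j)
  have hub : ∀ (n : ℕ) (j : ℤ), opNorm (prodSeq Λ n j) ≤ M ^ n := by
    intro n
    induction n with
    | zero => intro j; simpa [prodSeq] using le_of_eq opNorm_one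
    | succ n ih =>
      intro j
      calc opNorm (prodSeq Λ (n+1) j) ≤ opNorm (Λ (j + n)) * opNorm (prodSeq Λ n j) :=
            opNorm_mul_le _ _
      _ ≤ M * M ^ n := mul_le_mul (le_of_lt (hM _)) (ih j) (le_of_lt (hpos n j))
            (le_of_lt hMpos)
      _ = M ^ (n+1) := (pow_succ' M n).symm
  -- generic small-n bound
  have hgeneric : ∀ (n : ℕ) (j : ℤ) (D : ℝ), n + 1 ≤ Nt → 0 < D → D ≤ M ^ (n+1) →
      min (η / M) ((η / M) ^ Nt) ≤ opNorm (prodSeq Λ (n+1) j) / D := by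
    intro n j D hn hD hDle
    have h1 : (η / M) ^ Nt ≤ (η / M) ^ (n+1) := pow_le_pow_of_le_one hηM0 hηM1 hn
    have h2 : (η / M) ^ (n+1) ≤ opNorm (prodSeq Λ (n+1) j) / D := by
      rw [div_pow]
      exact div_le_div₀ (le_of_lt (hpos (n+1) j)) (hlb (n+1) j) hD hDle
    exact le_trans (min_le_right _ _) (le_trans h1 h2)
  intro n j
  rcases le_or_gt Nt n with hc | hc
  · -- large n : use hnorm
    have hP : 0 < ‖∏ k ∈ Finset.range n, lp ((j+1) + k)‖ :=
      lt_of_lt_of_le (pow_pos hη n) (hprod_lb n (j+1))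
    have hP' : 0 < ‖∏ k ∈ Finset.range n, lp (j + k)‖ :=
      lt_of_lt_of_le (pow_pos hη n) (hprod_lb n j)
    have hratio : ∀ i : ℤ, η / M ≤ ‖lp i‖ / opNorm (Λ i) := fun i =>
      div_le_div₀ (norm_nonneg _) (hlp i) (hΛpos i) (le_of_lt (hM i))
    have hkey : min (η / M) ((η / M) ^ Nt) ≤ η / M := min_le_left _ _
    constructor
    · -- first inequality
      have e1 : (∏ k ∈ Finset.range (n+1), lp (j + k)) =
          lp j * ∏ k ∈ Finset.range n, lp ((j+1) + k) := by
        rw [Finset.prod_range_succ', mul_comm]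
        congr 1
        · norm_num
        · apply Finset.prod_congr rfl
          intro k _
          congr 1
          push_cast
          ring
      have e2 : opNorm (prodSeq Λ (n+1) j) =
          ‖lp j‖ * ‖∏ k ∈ Finset.range n, lp ((j+1) + k)‖ := by
        rw [← hnorm (n+1) (le_trans hc (Nat.le_succ n)) j, e1, norm_mul]
      have e3 : opNorm (prodSeq Λ n (j+1)) =
          ‖∏ k ∈ Finset.range n, lp ((j+1) + k)‖ := (hnorm n hc (j+1)).symm
      rw [ge_iff_le, e2, e3, mul_div_mul_right _ _ (ne_of_gt hP)]
      exact le_trans hkey (hratio j)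
    · -- second inequality
      have e1 : (∏ k ∈ Finset.range (n+1), lp (j + k)) =
          (∏ k ∈ Finset.range n, lp (j + k)) * lp (j + n) := Finset.prod_range_succ _ _
      have e2 : opNorm (prodSeq Λ (n+1) j) =
          ‖∏ k ∈ Finset.range n, lp (j + k)‖ * ‖lp (j + n)‖ := by
        rw [← hnorm (n+1) (le_trans hc (Nat.le_succ n)) j, e1, norm_mul]
      have e3 : opNorm (prodSeq Λ n j) =
          ‖∏ k ∈ Finset.range n, lp (j + k)‖ := (hnorm n hc j).symm
      rw [ge_iff_le, e2, e3, mul_div_mul_left _ _ (ne_of_gt hP')]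
      exact le_trans hkey (hratio (j + n))
  · -- small n
    have hn : n + 1 ≤ Nt := hc
    have hd1 : opNorm (Λ j) * opNorm (prodSeq Λ n (j+1)) ≤ M ^ (n+1) := by
      rw [pow_succ']
      exact mul_le_mul (le_of_lt (hM j)) (hub n (j+1)) (le_of_lt (hpos n (j+1)))
        (le_of_lt hMpos)
    have hd2 : opNorm (prodSeq Λ n j) * opNorm (Λ (j + n)) ≤ M ^ (n+1) := by
      rw [pow_succ]
      exact mul_le_mul (hub n j) (le_of_lt (hM _)) (le_of_lt (hΛpos _))
        (pow_nonneg (le_of_lt hMpos) n)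
    exact ⟨hgeneric n j _ hn (mul_pos (hΛpos j) (hpos n (j+1))) hd1,
      hgeneric n j _ hn (mul_pos (hpos n j) (hΛpos (j + n))) hd2⟩
end
end
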